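/- Fix p ≥ 0 and for d ≥ 1 let f_{d,p}(x) = (Σ_{j=1}^d x_j − (d−1))₊^p for x ∈ [0,1]^d (with f_{d,0}(x) = 1{Σ_{j=1}^d x_j > d−1}). Then the mean dimension of f_{d,p} with respect to X ~ U[0,1]^d satisfies lim_{d→∞} (d − ν(f_{d,p})) = (4p + 2)/(p + 1). -/

import Mathlib

open MeasureTheory ProbabilityTheory Real Filter

noncomputable section

/-- Uniform measure on the cube `[0,1]^d`. -/
def unifCube (d : ℕ) : Measure (Fin d → ℝ) :=
  Measure.pi fun _ => (volume : Measure ℝ).restrict (Set.Icc 0 1)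

/-- Sobol' total index `τ̄²_j(f) = (1/2)·E[(f(X) − f(X_{−j}:Z_j))²]`
for `X, Z` independent and uniform on `[0,1]^d`. -/
def sobolTauU (d : ℕ) (f : (Fin d → ℝ) → ℝ) (j : Fin d) : ℝ :=
  (1 / 2) * ∫ p : (Fin d → ℝ) × (Fin d → ℝ),
    (f p.1 - f (Function.update p.1 j (p.2 j))) ^ 2
      ∂((unifCube d).prod (unifCube d))

/-- Mean dimension `ν(f) = (Σ_j τ̄²_j(f)) / Var(f(X))`. -/
def meanDimU (d : ℕ) (f : (Fin d → ℝ) → ℝ) : ℝ :=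
  (∑ j, sobolTauU d f j) / variance f (unifCube d)

/-- The cusp function `f_{d,p}(x) = (Σ_j x_j − (d−1))₊^p`, with the
convention that `f_{d,0}` is the indicator `1{Σ_j x_j > d−1}`. -/
def fdp (d : ℕ) (p : ℝ) (x : Fin d → ℝ) : ℝ :=
  if p = 0 then (if (d : ℝ) - 1 < ∑ j, x j then 1 else 0)
  else (max ((∑ j, x j) - ((d : ℝ) - 1)) 0) ^ p

namespace Stmt14Aux

/-- generalized cusp kernel: `G q y = (y₊)^q` with indicator convention at `q = 0`. -/
def G (q y : ℝ) : ℝ :=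
  if q = 0 then (if 0 < y then 1 else 0) else (max y 0) ^ q

def μ1 : Measure ℝ := (volume : Measure ℝ).restrict (Set.Icc 0 1)

instance : IsProbabilityMeasure μ1 := ⟨by simp [μ1, Real.volume_Icc]⟩

lemma G_nonneg (q y : ℝ) : 0 ≤ G q y := by
  unfold G; split_ifs with h h2
  · exact zero_le_one
  · exact le_refl 0
  · exact Real.rpow_nonneg (le_max_right _ _) _

lemma G_le_one {q y : ℝ} (hq : 0 ≤ q) (hy : y ≤ 1) : G q y ≤ 1 := by
  unfold G; split_ifs with h h2
  · exact le_refl 1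
  · exact zero_le_one
  · exact Real.rpow_le_one (le_max_right _ _) (max_le hy zero_le_one) hq

lemma G_of_nonpos {q y : ℝ} (hy : y ≤ 0) (hq : 0 ≤ q) : G q y = 0 := by
  unfold G; split_ifs with h h2
  · exact absurd (lt_of_lt_of_le h2 hy) (lt_irrefl 0)
  · rfl
  · rw [max_eq_right hy, Real.zero_rpow h]

lemma G_of_ne {q : ℝ} (hq : q ≠ 0) (y : ℝ) : G q y = (max y 0) ^ q := by
  unfold G; rw [if_neg hq]

lemma G_of_pos {q y : ℝ} (hy : 0 < y) : G q y = y ^ q := by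
  rcases eq_or_ne q 0 with rfl | h
  · unfold G; rw [if_pos rfl, if_pos hy, Real.rpow_zero]
  · rw [G_of_ne h, max_eq_left hy.le]

lemma G_sq (q y : ℝ) : (G q y) ^ (2:ℕ) = G (2*q) y := by
  rcases eq_or_ne q 0 with rfl | hq
  · simp only [mul_zero]
    unfold G; simp only [if_pos rfl]
    split_ifs <;> norm_num
  · rw [G_of_ne hq, G_of_ne (mul_ne_zero two_ne_zero hq),
      ← Real.rpow_natCast ((max y 0) ^ q) 2, ← Real.rpow_mul (le_max_right y 0)]
    norm_num [mul_comm]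

lemma measurable_G {q : ℝ} (hq : 0 ≤ q) : Measurable (G q) := by
  unfold G
  split_ifs with h
  · exact Measurable.ite measurableSet_Ioi measurable_const measurable_const
  · exact (Real.continuous_rpow_const hq).measurable.comp
      (continuous_id.max continuous_const).measurable


lemma intervalIntegrable_G {q : ℝ} (hq : 0 ≤ q) {u v : ℝ} (hu : u ≤ 1) (hv : v ≤ 1) :
    IntervalIntegrable (G q) volume u v := by
  rw [intervalIntegrable_iff]
  have : IsFiniteMeasure ((volume : Measure ℝ).restrict (Set.uIoc u v)) :=
    ⟨by rw [Measure.restrict_apply_univ]; exact measure_Ioc_lt_top⟩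
  refine Integrable.mono' (integrable_const 1) (measurable_G hq).aestronglyMeasurable ?_
  filter_upwards [ae_restrict_mem measurableSet_uIoc] with t ht
  rw [Real.norm_eq_abs, abs_of_nonneg (G_nonneg q t)]
  exact G_le_one hq (le_trans ht.2 (max_le hu hv))

lemma integral_G_slice {q a : ℝ} (hq : 0 ≤ q) (ha : a ≤ 0) :
    ∫ t, G q (a + t) ∂μ1 = (max (a+1) 0) ^ (q+1) / (q+1) := by
  have h0 : ∫ t, G q (a + t) ∂μ1 = ∫ t in (0:ℝ)..1, G q (a + t) := by
    rw [intervalIntegral.integral_of_le zero_le_one, μ1,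
      ← MeasureTheory.integral_Icc_eq_integral_Ioc]
  rw [h0, intervalIntegral.integral_comp_add_left (G q) a]
  rcases le_or_gt (a+1) 0 with h1 | h1
  · rw [max_eq_right h1, Real.zero_rpow (by linarith), zero_div]
    rw [intervalIntegral.integral_congr (g := fun _ => (0:ℝ))
      (fun t ht => ?_), intervalIntegral.integral_zero]
    rw [Set.uIcc_of_le (by linarith : a + 0 ≤ a + 1)] at ht
    exact G_of_nonpos (le_trans ht.2 h1) hq
  · have hii1 : IntervalIntegrable (G q) volume (a+0) 0 :=
      intervalIntegrable_G hq (by linarith) zero_le_one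
    have hii2 : IntervalIntegrable (G q) volume 0 (a+1) :=
      intervalIntegrable_G hq zero_le_one (by linarith)
    rw [← intervalIntegral.integral_add_adjacent_intervals hii1 hii2]
    have e1 : ∫ t in (a+0)..(0:ℝ), G q t = 0 := by
      rw [intervalIntegral.integral_congr (g := fun _ => (0:ℝ))
        (fun t ht => ?_), intervalIntegral.integral_zero]
      rw [Set.uIcc_of_le (by linarith : a + 0 ≤ 0)] at ht
      exact G_of_nonpos ht.2 hq
    have e2 : ∫ t in (0:ℝ)..(a+1), G q t = (a+1) ^ (q+1) / (q+1) := by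
      rw [intervalIntegral.integral_of_le h1.le,
        MeasureTheory.setIntegral_congr_fun measurableSet_Ioc
          (g := fun t : ℝ => t ^ q) (fun t ht => G_of_pos ht.1),
        ← intervalIntegral.integral_of_le h1.le,
        integral_rpow (Or.inl (by linarith)),
        Real.zero_rpow (by linarith), sub_zero]
    rw [e1, e2, zero_add, max_eq_left h1.le]

instance (d : ℕ) : IsProbabilityMeasure (unifCube d) := by
  rw [show unifCube d = Measure.pi fun _ : Fin d => μ1 from rfl]
  infer_instance

lemma ae_cube (d : ℕ) : ∀ᵐ x ∂unifCube d, ∀ j, x j ∈ Set.Icc (0:ℝ) 1 :=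
  (MeasureTheory.ae_all_iff).2 fun _ =>
    MeasureTheory.Measure.tendsto_eval_ae_ae.eventually
      (ae_restrict_mem measurableSet_Icc)

lemma sum_le_of_cube {n : ℕ} {y : Fin n → ℝ} (hy : ∀ j, y j ∈ Set.Icc (0:ℝ) 1) :
    ∑ k, y k ≤ (n:ℝ) := by
  calc ∑ k, y k ≤ ∑ _k : Fin n, (1:ℝ) :=
        Finset.sum_le_sum fun k _ => (hy k).2
    _ = n := by simp

lemma measurable_sum_fin (n : ℕ) : Measurable (fun y : Fin n → ℝ => ∑ k, y k) :=
  Finset.univ.measurable_sum fun k _ => measurable_pi_apply k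

lemma prod_succ_shift (q : ℝ) (n : ℕ) :
    ∏ i ∈ Finset.range (n+1), (q + i + 1)⁻¹
      = (q+1)⁻¹ * ∏ i ∈ Finset.range n, (q+1 + i + 1)⁻¹ := by
  rw [Finset.prod_range_succ']
  rw [show (q + ((0:ℕ):ℝ) + 1)⁻¹ = (q+1)⁻¹ by norm_num, mul_comm]
  congr 1
  apply Finset.prod_congr rfl fun i _ => ?_
  push_cast
  ring_nf

lemma ae_prod_cube (n : ℕ) :
    ∀ᵐ z ∂(μ1.prod (unifCube n)),
      z.1 ∈ Set.Icc (0:ℝ) 1 ∧ ∀ k, z.2 k ∈ Set.Icc (0:ℝ) 1 := by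
  have hset : MeasurableSet {z : ℝ × (Fin n → ℝ) |
      z.1 ∈ Set.Icc (0:ℝ) 1 ∧ ∀ k, z.2 k ∈ Set.Icc (0:ℝ) 1} := by
    have : {z : ℝ × (Fin n → ℝ) |
        z.1 ∈ Set.Icc (0:ℝ) 1 ∧ ∀ k, z.2 k ∈ Set.Icc (0:ℝ) 1}
        = (Set.Icc (0:ℝ) 1) ×ˢ (Set.univ.pi fun _ : Fin n => Set.Icc (0:ℝ) 1) := by
      ext z
      simp only [Set.mem_setOf_eq, Set.mem_prod, Set.mem_pi, Set.mem_univ,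
        true_implies]
    rw [this]
    exact measurableSet_Icc.prod (MeasurableSet.univ_pi fun _ => measurableSet_Icc)
  rw [Measure.ae_prod_iff_ae_ae hset]
  filter_upwards [ae_restrict_mem measurableSet_Icc] with t ht
  filter_upwards [ae_cube n] with y hy
  exact ⟨ht, hy⟩

lemma integrable_cube2 {n : ℕ} {F : ℝ × (Fin n → ℝ) → ℝ} (hF : Measurable F) (C : ℝ)
    (hC : ∀ z : ℝ × (Fin n → ℝ), z.1 ∈ Set.Icc (0:ℝ) 1 →
      (∀ k, z.2 k ∈ Set.Icc (0:ℝ) 1) → ‖F z‖ ≤ C) :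
    Integrable F (μ1.prod (unifCube n)) := by
  refine Integrable.mono' (integrable_const C) hF.aestronglyMeasurable ?_
  filter_upwards [ae_prod_cube n] with z hz
  exact hC z hz.1 hz.2

lemma integral_G_cube {q : ℝ} (hq : 0 ≤ q) (d : ℕ) :
    ∫ x, G q ((∑ j, x j) - ((d:ℝ) - 1)) ∂unifCube d
      = ∏ i ∈ Finset.range d, (q + i + 1)⁻¹ := by
  induction d generalizing q with
  | zero =>
      simp only [Finset.range_zero, Finset.prod_empty, Nat.cast_zero,
        Finset.univ_eq_empty, Finset.sum_empty]
      rw [integral_const, probReal_univ, smul_eq_mul, one_mul]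
      rw [show (0:ℝ) - (0 - 1) = 1 by ring, G_of_pos one_pos, Real.one_rpow]
  | succ n ih =>
      have hmp := measurePreserving_piFinSuccAbove (fun _ : Fin (n+1) => μ1) 0
      set e := MeasurableEquiv.piFinSuccAbove (fun _ : Fin (n+1) => ℝ) 0 with he
      have h1 : ∫ x, G q ((∑ j, x j) - (((n+1:ℕ):ℝ) - 1)) ∂unifCube (n+1)
          = ∫ z : ℝ × (Fin n → ℝ),
              G q (((∑ k, z.2 k) - (n:ℝ)) + z.1) ∂(μ1.prod (unifCube n)) := by
        have hcomp := hmp.integral_comp'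
          (g := fun z : ℝ × (Fin n → ℝ) => G q (((∑ k, z.2 k) - (n:ℝ)) + z.1))
        rw [show (unifCube (n+1)) = Measure.pi (fun _ : Fin (n+1) => μ1) from rfl]
        rw [show (μ1.prod (unifCube n))
            = μ1.prod (Measure.pi fun _ : Fin n => μ1) from rfl]
        rw [← hcomp]
        apply integral_congr_ae (Eventually.of_forall fun x => ?_)
        have hx : (∑ j, x j) = x 0 + ∑ k : Fin n, x ((0:Fin (n+1)).succAbove k) :=
          Fin.sum_univ_succAbove x 0
        have hp1 : (e x).1 = x 0 ∧ (e x).2 = fun k => x ((0:Fin (n+1)).succAbove k) :=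
          ⟨rfl, rfl⟩
        rw [hp1.1, hp1.2]
        congr 1
        rw [hx]
        push_cast
        ring
      rw [h1]
      have hmeas : Measurable
          (fun z : ℝ × (Fin n → ℝ) => G q (((∑ k, z.2 k) - (n:ℝ)) + z.1)) :=
        (measurable_G hq).comp
          ((((measurable_sum_fin n).comp measurable_snd).sub measurable_const).add
            measurable_fst)
      have hInt : Integrable
          (fun z : ℝ × (Fin n → ℝ) => G q (((∑ k, z.2 k) - (n:ℝ)) + z.1))
          (μ1.prod (unifCube n)) := by
        refine integrable_cube2 hmeas 1 fun z hz1 hz2 => ?_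
        rw [Real.norm_eq_abs, abs_of_nonneg (G_nonneg _ _)]
        exact G_le_one hq (by have := sum_le_of_cube hz2; linarith [hz1.2])
      rw [MeasureTheory.integral_prod_symm _ hInt]
      have h3 : ∫ y, (∫ t, G q (((∑ k, y k) - (n:ℝ)) + t) ∂μ1) ∂unifCube n
          = ∫ y, (q+1)⁻¹ * G (q+1) ((∑ k, y k) - ((n:ℝ) - 1)) ∂unifCube n := by
        apply integral_congr_ae
        filter_upwards [ae_cube n] with y hy
        have hsum : ∑ k, y k ≤ (n:ℝ) := sum_le_of_cube hy
        rw [integral_G_slice hq (by linarith), G_of_ne (by linarith : q+1 ≠ 0),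
          div_eq_inv_mul, show (∑ k, y k) - (n:ℝ) + 1 = (∑ k, y k) - ((n:ℝ) - 1) by ring]
      rw [h3, MeasureTheory.integral_const_mul,
        ih (by linarith : (0:ℝ) ≤ q + 1), ← prod_succ_shift]

lemma integral_G_pair {q : ℝ} (hq : 0 ≤ q) (n : ℕ) :
    ∫ z : ℝ × (Fin n → ℝ), G q ((∑ k, z.2 k) - (n:ℝ) + z.1) ∂(μ1.prod (unifCube n))
      = (q+1)⁻¹ * ∏ i ∈ Finset.range n, (q+1 + i + 1)⁻¹ := by
  have hmeas : Measurable
      (fun z : ℝ × (Fin n → ℝ) => G q (((∑ k, z.2 k) - (n:ℝ)) + z.1)) :=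
    (measurable_G hq).comp
      ((((measurable_sum_fin n).comp measurable_snd).sub measurable_const).add
        measurable_fst)
  have hInt : Integrable
      (fun z : ℝ × (Fin n → ℝ) => G q (((∑ k, z.2 k) - (n:ℝ)) + z.1))
      (μ1.prod (unifCube n)) := by
    refine integrable_cube2 hmeas 1 fun z hz1 hz2 => ?_
    rw [Real.norm_eq_abs, abs_of_nonneg (G_nonneg _ _)]
    exact G_le_one hq (by have := sum_le_of_cube hz2; linarith [hz1.2])
  rw [MeasureTheory.integral_prod_symm _ hInt]
  have h3 : ∫ y, (∫ t, G q (((∑ k, y k) - (n:ℝ)) + t) ∂μ1) ∂unifCube n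
      = ∫ y, (q+1)⁻¹ * G (q+1) ((∑ k, y k) - ((n:ℝ) - 1)) ∂unifCube n := by
    apply integral_congr_ae
    filter_upwards [ae_cube n] with y hy
    have hsum : ∑ k, y k ≤ (n:ℝ) := sum_le_of_cube hy
    rw [integral_G_slice hq (by linarith), G_of_ne (by linarith : q+1 ≠ 0),
      div_eq_inv_mul, show (∑ k, y k) - (n:ℝ) + 1 = (∑ k, y k) - ((n:ℝ) - 1) by ring]
  rw [h3, MeasureTheory.integral_const_mul, integral_G_cube (by linarith : (0:ℝ) ≤ q + 1) n]



lemma integrable_mu1_shift {q c : ℝ} (hq : 0 ≤ q) (hc : c ≤ 0) :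
    Integrable (fun t => G q (c + t)) μ1 := by
  refine Integrable.mono' (integrable_const 1)
    ((measurable_G hq).comp (measurable_const.add measurable_id)).aestronglyMeasurable ?_
  filter_upwards [ae_restrict_mem measurableSet_Icc] with t ht
  rw [Real.norm_eq_abs, abs_of_nonneg (G_nonneg _ _)]
  exact G_le_one hq (by linarith [ht.2])

lemma inner_sq_integral {p : ℝ} (hp : 0 ≤ p) {c : ℝ} (hc : c ≤ 0) (a : ℝ) :
    ∫ v, (a - G p (c + v))^2 ∂μ1
      = a^2 - 2 * a * ((p+1)⁻¹ * G (p+1) (c+1)) + (2*p+1)⁻¹ * G (2*p+1) (c+1) := by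
  have h1 : Integrable (fun v => G p (c+v)) μ1 := integrable_mu1_shift hp hc
  have h2 : Integrable (fun v => G (2*p) (c+v)) μ1 :=
    integrable_mu1_shift (by linarith) hc
  have e : (fun v => (a - G p (c+v))^2)
      = fun v => ((a^2 - (2*a) * G p (c+v)) + G (2*p) (c+v)) := by
    funext v
    rw [← G_sq]
    ring
  have hsub : Integrable (fun v => a^2 - (2*a) * G p (c+v)) μ1 :=
    (integrable_const _).sub (h1.const_mul _)
  rw [e, integral_add hsub h2,
    integral_sub (integrable_const _) (h1.const_mul _), integral_const, probReal_univ,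
    smul_eq_mul, one_mul, MeasureTheory.integral_const_mul,
    integral_G_slice hp hc, integral_G_slice (by linarith : (0:ℝ) ≤ 2*p) hc,
    G_of_ne (by linarith : p+1 ≠ 0), G_of_ne (by linarith : 2*p+1 ≠ 0)]
  ring

lemma ae_trip (n : ℕ) :
    ∀ᵐ z ∂((μ1.prod (unifCube n)).prod μ1),
      (z.1.1 ∈ Set.Icc (0:ℝ) 1 ∧ ∀ k, z.1.2 k ∈ Set.Icc (0:ℝ) 1)
        ∧ z.2 ∈ Set.Icc (0:ℝ) 1 := by
  have hset : MeasurableSet {z : (ℝ × (Fin n → ℝ)) × ℝ |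
      (z.1.1 ∈ Set.Icc (0:ℝ) 1 ∧ ∀ k, z.1.2 k ∈ Set.Icc (0:ℝ) 1)
        ∧ z.2 ∈ Set.Icc (0:ℝ) 1} := by
    have : {z : (ℝ × (Fin n → ℝ)) × ℝ |
        (z.1.1 ∈ Set.Icc (0:ℝ) 1 ∧ ∀ k, z.1.2 k ∈ Set.Icc (0:ℝ) 1)
          ∧ z.2 ∈ Set.Icc (0:ℝ) 1}
        = ((Set.Icc (0:ℝ) 1) ×ˢ (Set.univ.pi fun _ : Fin n => Set.Icc (0:ℝ) 1))
            ×ˢ (Set.Icc (0:ℝ) 1) := by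
      ext z
      simp only [Set.mem_setOf_eq, Set.mem_prod, Set.mem_pi, Set.mem_univ,
        true_implies]
    rw [this]
    exact (measurableSet_Icc.prod
      (MeasurableSet.univ_pi fun _ => measurableSet_Icc)).prod measurableSet_Icc
  rw [Measure.ae_prod_iff_ae_ae hset]
  filter_upwards [ae_prod_cube n] with z1 hz1
  filter_upwards [ae_restrict_mem measurableSet_Icc] with v hv
  exact ⟨hz1, hv⟩

lemma fdp_eq (d : ℕ) (p : ℝ) (x : Fin d → ℝ) :
    fdp d p x = G p ((∑ j, x j) - ((d:ℝ) - 1)) := by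
  unfold fdp G
  rcases eq_or_ne p 0 with rfl | h
  · simp [sub_pos]
  · rw [if_neg h, if_neg h]

lemma map_theta (n : ℕ) (j : Fin (n+1)) :
    (((unifCube (n+1)).prod (unifCube (n+1))).map
      (fun xy : (Fin (n+1) → ℝ) × (Fin (n+1) → ℝ) =>
        (((xy.1 j, fun k => xy.1 (j.succAbove k)) : ℝ × (Fin n → ℝ)), xy.2 j)))
      = (μ1.prod (unifCube n)).prod μ1 := by
  have hmpj := measurePreserving_piFinSuccAbove (fun _ : Fin (n+1) => μ1) j
  set e := MeasurableEquiv.piFinSuccAbove (fun _ : Fin (n+1) => ℝ) j with he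
  have h1 : (fun xy : (Fin (n+1) → ℝ) × (Fin (n+1) → ℝ) =>
        (((xy.1 j, fun k => xy.1 (j.succAbove k)) : ℝ × (Fin n → ℝ)), xy.2 j))
      = Prod.map (⇑e) (fun y : Fin (n+1) → ℝ => y j) := rfl
  have heval : (unifCube (n+1)).map (fun y : Fin (n+1) → ℝ => y j) = μ1 := by
    have h2 : (fun y : Fin (n+1) → ℝ => y j) = Prod.fst ∘ ⇑e := rfl
    rw [h2, ← Measure.map_map measurable_fst e.measurable]
    rw [show (unifCube (n+1)) = Measure.pi (fun _ : Fin (n+1) => μ1) from rfl,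
      hmpj.map_eq, Measure.map_fst_prod]
    have hP : IsProbabilityMeasure (Measure.pi fun _ : Fin n => μ1) := inferInstance
    rw [measure_univ, one_smul]
  rw [h1, ← Measure.map_prod_map _ _ e.measurable (measurable_pi_apply j), heval]
  rw [show (unifCube (n+1)) = Measure.pi (fun _ : Fin (n+1) => μ1) from rfl,
    hmpj.map_eq]
  rfl

lemma sobol_value {p : ℝ} (hp : 0 ≤ p) (n : ℕ) (j : Fin (n+1)) :
    sobolTauU (n+1) (fdp (n+1) p) j
      = (2*p+1)⁻¹ * (∏ i ∈ Finset.range n, (2*p+1 + i + 1)⁻¹)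
        - ((p+1)*(p+1))⁻¹ * (∏ i ∈ Finset.range n, (2*p+2 + i + 1)⁻¹) := by
  unfold sobolTauU
  have hΘ : Measurable (fun xy : (Fin (n+1) → ℝ) × (Fin (n+1) → ℝ) =>
      (((xy.1 j, fun k => xy.1 (j.succAbove k)) : ℝ × (Fin n → ℝ)), xy.2 j)) :=
    (((measurable_pi_apply j).comp measurable_fst).prodMk
      (measurable_pi_lambda _ fun k => (measurable_pi_apply _).comp measurable_fst)).prodMk
      ((measurable_pi_apply j).comp measurable_snd)
  have m0 : Measurable (fun z : (ℝ × (Fin n → ℝ)) × ℝ => (∑ k, z.1.2 k) - (n:ℝ)) :=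
    ((measurable_sum_fin n).comp (measurable_snd.comp measurable_fst)).sub
      measurable_const
  have hφm : Measurable (fun z : (ℝ × (Fin n → ℝ)) × ℝ =>
      (G p ((∑ k, z.1.2 k) - (n:ℝ) + z.1.1)
        - G p ((∑ k, z.1.2 k) - (n:ℝ) + z.2))^2) :=
    (((measurable_G hp).comp (m0.add (measurable_fst.comp measurable_fst))).sub
      ((measurable_G hp).comp (m0.add measurable_snd))).pow_const 2
  have key : (∫ pr : (Fin (n+1) → ℝ) × (Fin (n+1) → ℝ),
      (fdp (n+1) p pr.1 - fdp (n+1) p (Function.update pr.1 j (pr.2 j)))^2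
        ∂((unifCube (n+1)).prod (unifCube (n+1))))
      = ∫ z : (ℝ × (Fin n → ℝ)) × ℝ,
          (G p ((∑ k, z.1.2 k) - (n:ℝ) + z.1.1)
            - G p ((∑ k, z.1.2 k) - (n:ℝ) + z.2))^2
          ∂((μ1.prod (unifCube n)).prod μ1) := by
    rw [← map_theta n j, integral_map hΘ.aemeasurable hφm.aestronglyMeasurable]
    apply integral_congr_ae (Eventually.of_forall fun xy => ?_)
    have hsum1 : (∑ i, xy.1 i) - (((n+1:ℕ):ℝ) - 1)
        = (∑ k, xy.1 (j.succAbove k)) - (n:ℝ) + xy.1 j := by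
      rw [Fin.sum_univ_succAbove xy.1 j]
      push_cast
      ring
    have hsum2 : (∑ i, (Function.update xy.1 j (xy.2 j)) i) - (((n+1:ℕ):ℝ) - 1)
        = (∑ k, xy.1 (j.succAbove k)) - (n:ℝ) + xy.2 j := by
      rw [Fin.sum_univ_succAbove (Function.update xy.1 j (xy.2 j)) j,
        Function.update_self]
      have hup : ∀ k : Fin n,
          Function.update xy.1 j (xy.2 j) (j.succAbove k) = xy.1 (j.succAbove k) :=
        fun k => Function.update_of_ne (Fin.succAbove_ne j k) _ _
      rw [Finset.sum_congr rfl fun k _ => hup k]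
      push_cast
      ring
    rw [fdp_eq, fdp_eq, hsum1, hsum2]
  rw [key]
  have hIntφ : Integrable (fun z : (ℝ × (Fin n → ℝ)) × ℝ =>
      (G p ((∑ k, z.1.2 k) - (n:ℝ) + z.1.1)
        - G p ((∑ k, z.1.2 k) - (n:ℝ) + z.2))^2)
      ((μ1.prod (unifCube n)).prod μ1) := by
    refine Integrable.mono' (integrable_const 1) hφm.aestronglyMeasurable ?_
    filter_upwards [ae_trip n] with z hz
    obtain ⟨⟨hu, hw⟩, hv⟩ := hz
    have hs : ∑ k, z.1.2 k ≤ (n:ℝ) := sum_le_of_cube hw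
    have b1 : G p ((∑ k, z.1.2 k) - (n:ℝ) + z.1.1) ≤ 1 :=
      G_le_one hp (by linarith [hu.2])
    have b2 : G p ((∑ k, z.1.2 k) - (n:ℝ) + z.2) ≤ 1 :=
      G_le_one hp (by linarith [hv.2])
    have n1 := G_nonneg p ((∑ k, z.1.2 k) - (n:ℝ) + z.1.1)
    have n2 := G_nonneg p ((∑ k, z.1.2 k) - (n:ℝ) + z.2)
    rw [Real.norm_eq_abs, abs_of_nonneg (sq_nonneg _)]
    nlinarith
  rw [MeasureTheory.integral_prod _ hIntφ]
  have hstep : (∫ z1 : ℝ × (Fin n → ℝ),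
      (∫ v, (G p ((∑ k, z1.2 k) - (n:ℝ) + z1.1)
        - G p ((∑ k, z1.2 k) - (n:ℝ) + v))^2 ∂μ1) ∂(μ1.prod (unifCube n)))
      = ∫ z1 : ℝ × (Fin n → ℝ),
          (G (2*p) ((∑ k, z1.2 k) - (n:ℝ) + z1.1)
            - 2 * (G p ((∑ k, z1.2 k) - (n:ℝ) + z1.1)
              * ((p+1)⁻¹ * G (p+1) ((∑ k, z1.2 k) - ((n:ℝ)-1))))
            + (2*p+1)⁻¹ * G (2*p+1) ((∑ k, z1.2 k) - ((n:ℝ)-1)))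
          ∂(μ1.prod (unifCube n)) := by
    apply integral_congr_ae
    filter_upwards [ae_prod_cube n] with z1 hz1
    have hc : (∑ k, z1.2 k) - (n:ℝ) ≤ 0 := by
      have := sum_le_of_cube hz1.2
      linarith
    rw [inner_sq_integral hp hc, G_sq,
      show (∑ k, z1.2 k) - (n:ℝ) + 1 = (∑ k, z1.2 k) - ((n:ℝ)-1) by ring]
    ring
  rw [hstep]
  have minv : (p+1)⁻¹ ≤ 1 := by
    rw [inv_le_one_iff₀]
    right
    linarith
  have m2inv : (2*p+1)⁻¹ ≤ 1 := by
    rw [inv_le_one_iff₀]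
    right
    linarith
  have mI1 : Measurable (fun z1 : ℝ × (Fin n → ℝ) =>
      G (2*p) ((∑ k, z1.2 k) - (n:ℝ) + z1.1)) :=
    (measurable_G (by linarith)).comp
      ((((measurable_sum_fin n).comp measurable_snd).sub measurable_const).add
        measurable_fst)
  have mK : Measurable (fun z1 : ℝ × (Fin n → ℝ) =>
      G (p+1) ((∑ k, z1.2 k) - ((n:ℝ)-1))) :=
    (measurable_G (by linarith)).comp
      (((measurable_sum_fin n).comp measurable_snd).sub measurable_const)
  have mK2 : Measurable (fun z1 : ℝ × (Fin n → ℝ) =>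
      G (2*p+1) ((∑ k, z1.2 k) - ((n:ℝ)-1))) :=
    (measurable_G (by linarith)).comp
      (((measurable_sum_fin n).comp measurable_snd).sub measurable_const)
  have mIp : Measurable (fun z1 : ℝ × (Fin n → ℝ) =>
      G p ((∑ k, z1.2 k) - (n:ℝ) + z1.1)) :=
    (measurable_G hp).comp
      ((((measurable_sum_fin n).comp measurable_snd).sub measurable_const).add
        measurable_fst)
  have I1 : Integrable (fun z1 : ℝ × (Fin n → ℝ) =>
      G (2*p) ((∑ k, z1.2 k) - (n:ℝ) + z1.1)) (μ1.prod (unifCube n)) := by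
    refine integrable_cube2 mI1 1 fun z hz1 hz2 => ?_
    rw [Real.norm_eq_abs, abs_of_nonneg (G_nonneg _ _)]
    exact G_le_one (by linarith) (by have := sum_le_of_cube hz2; linarith [hz1.2])
  have I2 : Integrable (fun z1 : ℝ × (Fin n → ℝ) =>
      G p ((∑ k, z1.2 k) - (n:ℝ) + z1.1)
        * ((p+1)⁻¹ * G (p+1) ((∑ k, z1.2 k) - ((n:ℝ)-1)))) (μ1.prod (unifCube n)) := by
    refine integrable_cube2 (mIp.mul (mK.const_mul _)) 1 fun z hz1 hz2 => ?_
    have hs := sum_le_of_cube hz2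
    have b1 : G p ((∑ k, z.2 k) - (n:ℝ) + z.1) ≤ 1 :=
      G_le_one hp (by linarith [hz1.2])
    have b2 : G (p+1) ((∑ k, z.2 k) - ((n:ℝ)-1)) ≤ 1 :=
      G_le_one (by linarith) (by linarith)
    have n1 := G_nonneg p ((∑ k, z.2 k) - (n:ℝ) + z.1)
    have n2 := G_nonneg (p+1) ((∑ k, z.2 k) - ((n:ℝ)-1))
    have hpi : 0 ≤ (p+1)⁻¹ := by positivity
    have minv : (p+1)⁻¹ ≤ 1 := by
      rw [inv_le_one_iff₀]
      right
      linarith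
    have hK : (p+1)⁻¹ * G (p+1) ((∑ k, z.2 k) - ((n:ℝ)-1)) ≤ 1 := by
      have := mul_le_mul minv b2 n2 zero_le_one
      simpa using this
    rw [Real.norm_eq_abs, abs_of_nonneg (by positivity)]
    have := mul_le_mul b1 hK (by positivity) zero_le_one
    simpa using this
  have I3 : Integrable (fun z1 : ℝ × (Fin n → ℝ) =>
      (2*p+1)⁻¹ * G (2*p+1) ((∑ k, z1.2 k) - ((n:ℝ)-1))) (μ1.prod (unifCube n)) := by
    refine integrable_cube2 (mK2.const_mul _) 1 fun z hz1 hz2 => ?_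
    have hs := sum_le_of_cube hz2
    have b2 : G (2*p+1) ((∑ k, z.2 k) - ((n:ℝ)-1)) ≤ 1 :=
      G_le_one (by linarith) (by linarith)
    have n2 := G_nonneg (2*p+1) ((∑ k, z.2 k) - ((n:ℝ)-1))
    have h2pi : 0 ≤ (2*p+1)⁻¹ := by positivity
    rw [Real.norm_eq_abs, abs_of_nonneg (by positivity)]
    nlinarith
  have Isub : Integrable (fun z1 : ℝ × (Fin n → ℝ) =>
      G (2*p) ((∑ k, z1.2 k) - (n:ℝ) + z1.1)
        - 2 * (G p ((∑ k, z1.2 k) - (n:ℝ) + z1.1)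
          * ((p+1)⁻¹ * G (p+1) ((∑ k, z1.2 k) - ((n:ℝ)-1))))) (μ1.prod (unifCube n)) :=
    I1.sub (I2.const_mul 2)
  rw [integral_add Isub I3,
    integral_sub I1 (I2.const_mul 2), MeasureTheory.integral_const_mul]
  have E1 : (∫ z1 : ℝ × (Fin n → ℝ),
      G (2*p) ((∑ k, z1.2 k) - (n:ℝ) + z1.1) ∂(μ1.prod (unifCube n)))
      = (2*p+1)⁻¹ * ∏ i ∈ Finset.range n, (2*p+1 + i + 1)⁻¹ :=
    integral_G_pair (by linarith) n
  have E3 : (∫ z1 : ℝ × (Fin n → ℝ),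
      (2*p+1)⁻¹ * G (2*p+1) ((∑ k, z1.2 k) - ((n:ℝ)-1)) ∂(μ1.prod (unifCube n)))
      = (2*p+1)⁻¹ * ∏ i ∈ Finset.range n, (2*p+1 + i + 1)⁻¹ := by
    rw [MeasureTheory.integral_const_mul]
    congr 1
    have hg : AEStronglyMeasurable
        (fun w : Fin n → ℝ => G (2*p+1) ((∑ k, w k) - ((n:ℝ)-1)))
        (Measure.map Prod.snd (μ1.prod (unifCube n))) :=
      ((measurable_G (by linarith)).comp
        ((measurable_sum_fin n).sub measurable_const)).aestronglyMeasurable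
    have hmap2 : (∫ z1 : ℝ × (Fin n → ℝ),
        G (2*p+1) ((∑ k, z1.2 k) - ((n:ℝ)-1)) ∂(μ1.prod (unifCube n)))
        = ∫ w, G (2*p+1) ((∑ k, w k) - ((n:ℝ)-1)) ∂unifCube n := by
      rw [← integral_map measurable_snd.aemeasurable hg, Measure.map_snd_prod,
        measure_univ, one_smul]
    rw [hmap2]
    exact integral_G_cube (q := 2*p+1) (by linarith) n
  have E2 : (∫ z1 : ℝ × (Fin n → ℝ),
      G p ((∑ k, z1.2 k) - (n:ℝ) + z1.1)
        * ((p+1)⁻¹ * G (p+1) ((∑ k, z1.2 k) - ((n:ℝ)-1))) ∂(μ1.prod (unifCube n)))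
      = ((p+1)*(p+1))⁻¹ * ∏ i ∈ Finset.range n, (2*p+2 + i + 1)⁻¹ := by
    rw [MeasureTheory.integral_prod_symm _ I2]
    have h4 : (∫ w, (∫ u, G p ((∑ k, w k) - (n:ℝ) + u)
          * ((p+1)⁻¹ * G (p+1) ((∑ k, w k) - ((n:ℝ)-1))) ∂μ1) ∂unifCube n)
        = ∫ w, ((p+1)*(p+1))⁻¹ * G (2*p+2) ((∑ k, w k) - ((n:ℝ)-1)) ∂unifCube n := by
      apply integral_congr_ae
      filter_upwards [ae_cube n] with w hw
      have hsum := sum_le_of_cube hw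
      rw [MeasureTheory.integral_mul_const,
        integral_G_slice hp (by linarith : (∑ k, w k) - (n:ℝ) ≤ 0),
        show (∑ k, w k) - (n:ℝ) + 1 = (∑ k, w k) - ((n:ℝ)-1) by ring,
        ← G_of_ne (by linarith : p+1 ≠ 0)]
      have hGsq := G_sq (p+1) ((∑ k, w k) - ((n:ℝ)-1))
      rw [show 2*(p+1) = 2*p+2 by ring] at hGsq
      rw [← hGsq, mul_inv]
      ring
    rw [h4, MeasureTheory.integral_const_mul,
      integral_G_cube (q := 2*p+2) (by linarith) n]
  rw [E1, E3, E2]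
  ring

lemma measurable_fdp (d : ℕ) {p : ℝ} (hp : 0 ≤ p) : Measurable (fdp d p) := by
  have h : fdp d p = fun x => G p ((∑ j, x j) - ((d:ℝ)-1)) :=
    funext fun x => fdp_eq d p x
  rw [h]
  exact (measurable_G hp).comp ((measurable_sum_fin d).sub measurable_const)

lemma integral_fdp {p : ℝ} (hp : 0 ≤ p) (d : ℕ) :
    ∫ x, fdp d p x ∂unifCube d = ∏ i ∈ Finset.range d, (p + i + 1)⁻¹ := by
  simp only [fdp_eq]
  exact integral_G_cube hp d

lemma integral_fdp_sq {p : ℝ} (hp : 0 ≤ p) (d : ℕ) :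
    ∫ x, (fdp d p x)^2 ∂unifCube d = ∏ i ∈ Finset.range d, (2*p + i + 1)⁻¹ := by
  simp only [fdp_eq, G_sq]
  exact integral_G_cube (by linarith) d

lemma memLp_fdp {p : ℝ} (hp : 0 ≤ p) (d : ℕ) : MemLp (fdp d p) 2 (unifCube d) := by
  refine MemLp.of_bound (measurable_fdp d hp).aestronglyMeasurable 1 ?_
  filter_upwards [ae_cube d] with x hx
  rw [fdp_eq, Real.norm_eq_abs, abs_of_nonneg (G_nonneg _ _)]
  exact G_le_one hp (by have := sum_le_of_cube hx; linarith)

lemma variance_fdp {p : ℝ} (hp : 0 ≤ p) (d : ℕ) :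
    variance (fdp d p) (unifCube d)
      = (∏ i ∈ Finset.range d, (2*p + i + 1)⁻¹)
        - (∏ i ∈ Finset.range d, (p + i + 1)⁻¹)^2 := by
  rw [ProbabilityTheory.variance_eq_sub (memLp_fdp hp d)]
  have h1 : (unifCube d)[(fdp d p) ^ 2] = ∫ x, (fdp d p x)^2 ∂unifCube d := by
    apply integral_congr_ae (Eventually.of_forall fun x => ?_)
    simp
  rw [h1, integral_fdp_sq hp d, integral_fdp hp d]

lemma meanDim_eq {p : ℝ} (hp : 0 ≤ p) (n : ℕ) :
    meanDimU (n+1) (fdp (n+1) p)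
      = (((n+1:ℕ):ℝ) * ((2*p+1)⁻¹ * (∏ i ∈ Finset.range n, (2*p+1 + i + 1)⁻¹)
          - ((p+1)*(p+1))⁻¹ * (∏ i ∈ Finset.range n, (2*p+2 + i + 1)⁻¹)))
        / ((∏ i ∈ Finset.range (n+1), (2*p + i + 1)⁻¹)
            - (∏ i ∈ Finset.range (n+1), (p + i + 1)⁻¹)^2) := by
  unfold meanDimU
  rw [variance_fdp hp (n+1)]
  congr 1
  rw [Finset.sum_congr rfl fun j _ => sobol_value hp n j, Finset.sum_const,
    Finset.card_univ, Fintype.card_fin, nsmul_eq_mul]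

def Vfn (p : ℝ) (m : ℕ) : ℝ := ∏ i ∈ Finset.range (m+2), (2*p + i + 1)⁻¹
def Mn (p : ℝ) (m : ℕ) : ℝ := ∏ i ∈ Finset.range (m+2), (p + i + 1)⁻¹
def Ccn (p : ℝ) (m : ℕ) : ℝ :=
  ((p+1)*(p+1))⁻¹ * ∏ i ∈ Finset.range (m+1), (2*p+2 + i + 1)⁻¹

lemma Vfn_pos {p : ℝ} (hp : 0 ≤ p) (m : ℕ) : 0 < Vfn p m :=
  Finset.prod_pos fun i _ => by positivity

lemma Ccn_pos {p : ℝ} (hp : 0 ≤ p) (m : ℕ) : 0 < Ccn p m :=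
  mul_pos (by positivity) (Finset.prod_pos fun i _ => by positivity)

lemma Q_prod {p : ℝ} (hp : 0 ≤ p) (m : ℕ) :
    (Mn p m)^2 / Vfn p m
      = ∏ i ∈ Finset.range (m+2), ((2*p + i + 1) / (p + i + 1)^2) := by
  unfold Mn Vfn
  rw [← Finset.prod_pow, ← Finset.prod_div_distrib]
  apply Finset.prod_congr rfl fun i _ => ?_
  have h1 : ((p:ℝ) + i + 1) ≠ 0 := by positivity
  have h2 : (2*p + (i:ℝ) + 1) ≠ 0 := by positivity
  field_simp

lemma Q_lt_one {p : ℝ} (hp : 0 ≤ p) (m : ℕ) : (Mn p m)^2 / Vfn p m < 1 := by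
  rw [Q_prod hp m]
  have h := Finset.prod_lt_prod (s := Finset.range (m+2))
    (f := fun i : ℕ => (2*p + i + 1)/(p + i + 1)^2)
    (g := fun _ : ℕ => (1:ℝ))
    (fun i _ => by positivity)
    (fun i _ => by
      rw [div_le_one (by positivity)]
      have hi : (0:ℝ) ≤ i := Nat.cast_nonneg i
      nlinarith)
    ⟨1, Finset.mem_range.mpr (by omega), by
      rw [div_lt_one (by positivity)]
      push_cast
      nlinarith⟩
  simpa using h

lemma Q_bound {p : ℝ} (hp : 0 ≤ p) (m : ℕ) :
    (Mn p m)^2 / Vfn p m ≤ 2^(m+2) / (Nat.factorial (m+2) : ℝ) := by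
  rw [Q_prod hp m]
  have hle : ∀ i ∈ Finset.range (m+2),
      (2*p + i + 1)/(p + i + 1)^2 ≤ 2 / ((i:ℝ) + 1) := by
    intro i _
    rw [div_le_div_iff₀ (by positivity) (by positivity)]
    have hi : (0:ℝ) ≤ i := Nat.cast_nonneg i
    nlinarith
  calc (∏ i ∈ Finset.range (m+2), ((2*p + i + 1)/(p + i + 1)^2))
      ≤ ∏ i ∈ Finset.range (m+2), (2 / ((i:ℝ) + 1)) :=
        Finset.prod_le_prod (fun i _ => by positivity) hle
    _ = 2^(m+2) / (Nat.factorial (m+2) : ℝ) := by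
        rw [Finset.prod_div_distrib, Finset.prod_const, Finset.card_range]
        congr 1
        calc ∏ i ∈ Finset.range (m+2), ((i:ℝ)+1)
            = ((∏ i ∈ Finset.range (m+2), (i+1) : ℕ) : ℝ) := by push_cast; rfl
          _ = (Nat.factorial (m+2) : ℝ) := by
              rw [Finset.prod_range_add_one_eq_factorial]

lemma meanDim_eq2 {p : ℝ} (hp : 0 ≤ p) (m : ℕ) :
    meanDimU (m+2) (fdp (m+2) p)
      = (((m+2:ℕ):ℝ) * (Vfn p m - Ccn p m)) / (Vfn p m - (Mn p m)^2) := by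
  have hmd := meanDim_eq hp (m+1)
  rw [prod_succ_shift (2*p) (m+1)] at hmd
  unfold Vfn Ccn Mn
  rw [prod_succ_shift (2*p) (m+1)]
  rw [mul_sub] at hmd ⊢
  exact hmd

lemma key_id {p : ℝ} (hp : 0 ≤ p) (m : ℕ) (hden : (Mn p m)^2 < Vfn p m) :
    ((m+2:ℕ):ℝ) - meanDimU (m+2) (fdp (m+2) p)
      = (((m+2:ℕ):ℝ)*(Ccn p m / Vfn p m) - ((m+2:ℕ):ℝ)*((Mn p m)^2/Vfn p m))
          / (1 - (Mn p m)^2/Vfn p m) := by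
  rw [meanDim_eq2 hp m]
  have hV : Vfn p m ≠ 0 := (Vfn_pos hp m).ne'
  have hd : Vfn p m - (Mn p m)^2 ≠ 0 := ne_of_gt (by linarith)
  field_simp
  ring

lemma A_form {p : ℝ} (hp : 0 ≤ p) (m : ℕ) :
    ((m+2:ℕ):ℝ) * (Ccn p m / Vfn p m)
      = ((4*p+2)/(p+1)) * (((m:ℝ)+2)/((m:ℝ)+3+2*p)) := by
  have hVe : Vfn p m = (2*p+1)⁻¹ * ((2*p+1+1)⁻¹
      * ∏ i ∈ Finset.range m, (2*p+1+1 + i + 1)⁻¹) := by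
    unfold Vfn
    rw [prod_succ_shift (2*p) (m+1), prod_succ_shift (2*p+1) m]
  have hCe : Ccn p m = ((p+1)*(p+1))⁻¹
      * ((∏ i ∈ Finset.range m, (2*p+2 + i + 1)⁻¹) * (2*p+2 + (m:ℝ) + 1)⁻¹) := by
    unfold Ccn
    rw [Finset.prod_range_succ]
  have hBB : (∏ i ∈ Finset.range m, (2*p+1+1 + (i:ℝ) + 1)⁻¹)
      = ∏ i ∈ Finset.range m, (2*p+2 + (i:ℝ) + 1)⁻¹ :=
    Finset.prod_congr rfl fun i _ => by ring_nf
  rw [hVe, hCe, hBB]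
  have hB : (0:ℝ) < ∏ i ∈ Finset.range m, (2*p+2 + (i:ℝ) + 1)⁻¹ :=
    Finset.prod_pos fun i _ => by positivity
  have h1 : (0:ℝ) < 2*p+1 := by linarith
  have h2 : (0:ℝ) < 2*p+1+1 := by linarith
  have h3 : (0:ℝ) < p+1 := by linarith
  have h4 : (0:ℝ) < 2*p+2 + (m:ℝ) + 1 := by positivity
  have h5 : (0:ℝ) < (m:ℝ)+3+2*p := by positivity
  push_cast
  field_simp
  ring

end Stmt14Aux

open Stmt14Aux

/-- For fixed `p ≥ 0`, `lim_{d→∞} (d − ν(f_{d,p})) = (4p+2)/(p+1)`. -/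
theorem stmt14 (p : ℝ) (hp : 0 ≤ p) :
    Tendsto (fun d : ℕ => (d : ℝ) - meanDimU d (fdp d p))
      atTop (nhds ((4 * p + 2) / (p + 1))) := by
  have hQ0 : Tendsto (fun m => (Mn p m)^2 / Vfn p m) atTop (nhds 0) := by
    refine squeeze_zero (fun m => div_nonneg (sq_nonneg _) (Vfn_pos hp m).le)
      (fun m => Q_bound hp m) ?_
    have h := (FloorSemiring.tendsto_pow_div_factorial_atTop (2:ℝ)).comp
      (tendsto_add_atTop_nat 2)
    simpa [Function.comp_def] using h
  have hdB : Tendsto (fun m => ((m+2:ℕ):ℝ) * ((Mn p m)^2 / Vfn p m))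
      atTop (nhds 0) := by
    have h4 : Tendsto (fun m : ℕ => (4:ℝ)^(m+2) / (Nat.factorial (m+2) : ℝ))
        atTop (nhds 0) := by
      have h := (FloorSemiring.tendsto_pow_div_factorial_atTop (4:ℝ)).comp
        (tendsto_add_atTop_nat 2)
      simpa [Function.comp_def] using h
    refine squeeze_zero (fun m => mul_nonneg (by positivity)
      (div_nonneg (sq_nonneg _) (Vfn_pos hp m).le)) (fun m => ?_) h4
    have hd2 : ((m+2:ℕ):ℝ) ≤ 2^(m+2) := by
      calc ((m+2:ℕ):ℝ) ≤ ((2^(m+2) : ℕ) : ℝ) :=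
            Nat.cast_le.mpr ((Nat.lt_two_pow_self (n := m+2))).le
        _ = 2^(m+2) := by push_cast; ring
    have hQnn : 0 ≤ (Mn p m)^2 / Vfn p m :=
      div_nonneg (sq_nonneg _) (Vfn_pos hp m).le
    calc ((m+2:ℕ):ℝ) * ((Mn p m)^2/Vfn p m)
        ≤ 2^(m+2) * (2^(m+2)/(Nat.factorial (m+2):ℝ)) :=
          mul_le_mul hd2 (Q_bound hp m) hQnn (by positivity)
      _ = 4^(m+2)/(Nat.factorial (m+2):ℝ) := by
          rw [← mul_div_assoc, ← mul_pow]
          norm_num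
  have hA : Tendsto (fun m => ((m+2:ℕ):ℝ) * (Ccn p m / Vfn p m))
      atTop (nhds ((4*p+2)/(p+1))) := by
    have hden : Tendsto (fun m : ℕ => (m:ℝ) + 3 + 2*p) atTop atTop :=
      tendsto_atTop_add_const_right _ _
        (tendsto_atTop_add_const_right _ 3 tendsto_natCast_atTop_atTop)
    have h0 : Tendsto (fun m : ℕ => ((1:ℝ)+2*p) / ((m:ℝ)+3+2*p)) atTop (nhds 0) :=
      Filter.Tendsto.div_atTop tendsto_const_nhds hden
    have h1 : Tendsto (fun m : ℕ => ((m:ℝ)+2)/((m:ℝ)+3+2*p)) atTop (nhds 1) := by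
      have h2 := (tendsto_const_nhds (x := (1:ℝ)) (f := (atTop : Filter ℕ))).sub h0
      rw [sub_zero] at h2
      refine Tendsto.congr (fun m => ?_) h2
      have hpos : (0:ℝ) < (m:ℝ)+3+2*p := by positivity
      field_simp
      ring
    have h3 := (tendsto_const_nhds (x := (4*p+2)/(p+1)) (f := (atTop : Filter ℕ))).mul h1
    rw [mul_one] at h3
    exact Tendsto.congr (fun m => (A_form hp m).symm) h3
  have hfinal := (hA.sub hdB).div
    ((tendsto_const_nhds (x := (1:ℝ)) (f := (atTop : Filter ℕ))).sub hQ0) (by norm_num)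
  have hfinal2 : Tendsto (fun m : ℕ =>
      (((m+2:ℕ):ℝ)*(Ccn p m/Vfn p m) - ((m+2:ℕ):ℝ)*((Mn p m)^2/Vfn p m))
        / (1 - (Mn p m)^2/Vfn p m)) atTop (nhds ((4*p+2)/(p+1))) := by
    rw [sub_zero, sub_zero, div_one] at hfinal
    exact hfinal
  have heq : ∀ m : ℕ, (((m+2:ℕ):ℝ)) - meanDimU (m+2) (fdp (m+2) p)
      = (((m+2:ℕ):ℝ)*(Ccn p m/Vfn p m) - ((m+2:ℕ):ℝ)*((Mn p m)^2/Vfn p m))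
          / (1 - (Mn p m)^2/Vfn p m) := by
    intro m
    refine key_id hp m ?_
    have h := Q_lt_one hp m
    rw [div_lt_one (Vfn_pos hp m)] at h
    exact h
  have main : Tendsto (fun m : ℕ => ((m+2:ℕ):ℝ) - meanDimU (m+2) (fdp (m+2) p))
      atTop (nhds ((4*p+2)/(p+1))) :=
    Tendsto.congr (fun m => (heq m).symm) hfinal2
  exact (Filter.tendsto_add_atTop_iff_nat 2).mp main
end
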